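/- Sufficient statistics for the Lagrangian (core of Fact 3): Let β and β′ be two nonnegative families of dual variables for the Anderson relaxation, i.e., β_{k,0}, β_{k,1}, β′_{k,0}, β′_{k,1} ∈ ℝ^{n_k}_{≥0} and β_{k,I}, β′_{k,I} ∈ ℝ^{n_k}_{≥0} for each layer k ∈ {1, …, n−1} and each mask I ∈ E_k. Suppose that for every layer k: β_{k,0} = β′_{k,0}, β_{k,1} = β′_{k,1}, and the four linearly-sized statistics coincide: Σ_{I∈E_k} β_{k,I} = Σ_{I∈E_k} β′_{k,I}, Σ_{I∈E_k} (W_k ⊙ I)^T β_{k,I} = Σ_{I∈E_k} (W_k ⊙ I)^T β′_{k,I}, Σ_{I∈E_k} rowsum(W_k ⊙ I ⊙ Ľ_{k−1}) ⊙ β_{k,I} = Σ_{I∈E_k} rowsum(W_k ⊙ I ⊙ Ľ_{k−1}) ⊙ β′_{k,I}, and Σ_{I∈E_k} rowsum(W_k ⊙ I ⊙ Ǔ_{k−1}) ⊙ β_{k,I} = Σ_{I∈E_k} rowsum(W_k ⊙ I ⊙ Ǔ_{k−1}) ⊙ β′_{k,I}. Then L(x, z, α, β) = L(x, z, α, β′)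 for all primal points (x, z) and all multipliers α; that is, the Lagrangian depends on the exponentially many dual variables only through these linearly-sized sufficient statistics. -/

import Mathlib

open Finset

/-- `Ľ[i,j]`: lower corner of the box assigned according to the sign of `W[i,j]`. -/
noncomputable def cLmat {m n : ℕ} (W : Fin m → Fin n → ℝ) (l u : Fin n → ℝ)
    (i : Fin m) (j : Fin n) : ℝ :=
  if 0 ≤ W i j then l j else u j

/-- `Ǔ[i,j]`: upper corner of the box assigned according to the sign of `W[i,j]`. -/
noncomputable def cUmat {m n : ℕ} (W : Fin m → Fin n → ℝ) (l u : Fin n → ℝ)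
    (i : Fin m) (j : Fin n) : ℝ :=
  if 0 ≤ W i j then u j else l j

/-- Real value of a Boolean mask entry. -/
noncomputable def mval {m n : ℕ} (I : Fin m → Fin n → Bool)
    (i : Fin m) (j : Fin n) : ℝ :=
  if I i j then 1 else 0

/-- Right-hand side of the Anderson constraint for neuron `i` with mask `I`. -/
noncomputable def andRHS {m n : ℕ} (W : Fin m → Fin n → ℝ) (b : Fin m → ℝ)
    (l u : Fin n → ℝ) (I : Fin m → Fin n → Bool)
    (x : Fin n → ℝ) (z : Fin m → ℝ) (i : Fin m) : ℝ :=
  (∑ j, W i j * mval I i j * x j) + z i * b i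
    - (∑ j, W i j * mval I i j * cLmat W l u i j) * (1 - z i)
    + (∑ j, W i j * (1 - mval I i j) * cUmat W l u i j) * z i

/-- The exponential family `E_k` of masks, excluding the all-zero and
all-one masks. -/
def Ek (m n : ℕ) : Finset (Fin m → Fin n → Bool) :=
  Finset.univ.filter (fun I => I ≠ (fun _ _ => false) ∧ I ≠ (fun _ _ => true))

/-- The Lagrangian of the Anderson relaxation (eq. (7)), with hidden layers
`k = 1, …, n−1` and scalar output `W_n x_{n−1} + b_n`. -/
noncomputable def lagr (n : ℕ) (d : ℕ → ℕ)
    (W : (k : ℕ) → Fin (d k) → Fin (d (k-1)) → ℝ)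
    (b : (k : ℕ) → Fin (d k) → ℝ)
    (lhat uhat : (k : ℕ) → Fin (d k) → ℝ)
    (l u : (k : ℕ) → Fin (d k) → ℝ)
    (Wn : Fin (d (n-1)) → ℝ) (bn : ℝ)
    (x z : (k : ℕ) → Fin (d k) → ℝ)
    (α β0 β1 : (k : ℕ) → Fin (d k) → ℝ)
    (βI : (k : ℕ) → (Fin (d k) → Fin (d (k-1)) → Bool) → Fin (d k) → ℝ) : ℝ :=
  ((∑ j, Wn j * x (n-1) j) + bn)
  + ∑ k ∈ Finset.Icc 1 (n-1),
      ( (∑ i, α k i * ((∑ j, W k i j * x (k-1) j) + b k i - x k i))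
      + (∑ i, β0 k i * (x k i - uhat k i * z k i))
      + (∑ i, β1 k i * (x k i - ((∑ j, W k i j * x (k-1) j) + b k i)
          + lhat k i * (1 - z k i)))
      + (∑ I ∈ Ek (d k) (d (k-1)), ∑ i, βI k I i *
          (x k i - andRHS (W k) (b k) (l (k-1)) (u (k-1)) I (x (k-1)) (z k) i)) )


/-- Per-layer decomposition: the βI-weighted Anderson term depends on β only
through the four linearly-sized statistics. -/
lemma layer_stat {m n : ℕ} (W : Fin m → Fin n → ℝ) (b : Fin m → ℝ) (l u : Fin n → ℝ)
    (x : Fin n → ℝ) (xk z : Fin m → ℝ) (β : (Fin m → Fin n → Bool) → Fin m → ℝ) :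
    (∑ I ∈ Ek m n, ∑ i, β I i * (xk i - andRHS W b l u I x z i))
    = (∑ i, (xk i - z i * b i - (∑ j, W i j * cUmat W l u i j) * z i)
        * (∑ I ∈ Ek m n, β I i))
      - (∑ j, x j * (∑ I ∈ Ek m n, ∑ i, W i j * mval I i j * β I i))
      + (∑ i, (1 - z i)
          * (∑ I ∈ Ek m n, (∑ j, W i j * mval I i j * cLmat W l u i j) * β I i))
      + (∑ i, z i
          * (∑ I ∈ Ek m n, (∑ j, W i j * mval I i j * cUmat W l u i j) * β I i)) := by
  have key : ∀ I, (∑ i, β I i * (xk i - andRHS W b l u I x z i))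
      = (∑ i, (xk i - z i * b i - (∑ j, W i j * cUmat W l u i j) * z i) * β I i)
        - (∑ j, x j * (∑ i, W i j * mval I i j * β I i))
        + (∑ i, (1 - z i) * ((∑ j, W i j * mval I i j * cLmat W l u i j) * β I i))
        + (∑ i, z i * ((∑ j, W i j * mval I i j * cUmat W l u i j) * β I i)) := by
    intro I
    have hswap : (∑ j, x j * (∑ i, W i j * mval I i j * β I i))
        = ∑ i, β I i * (∑ j, W i j * mval I i j * x j) := by
      simp_rw [Finset.mul_sum]
      rw [Finset.sum_comm]
      apply Finset.sum_congr rfl; intro i _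
      apply Finset.sum_congr rfl; intro j _
      ring
    rw [hswap]
    rw [← Finset.sum_sub_distrib, ← Finset.sum_add_distrib, ← Finset.sum_add_distrib]
    apply Finset.sum_congr rfl; intro i _
    unfold andRHS
    have h1 : (∑ j, W i j * (1 - mval I i j) * cUmat W l u i j)
        = (∑ j, W i j * cUmat W l u i j) - (∑ j, W i j * mval I i j * cUmat W l u i j) := by
      rw [← Finset.sum_sub_distrib]
      apply Finset.sum_congr rfl; intro j _; ring
    rw [h1]; ring
  rw [Finset.sum_congr rfl (fun I _ => key I)]
  rw [Finset.sum_add_distrib, Finset.sum_add_distrib, Finset.sum_sub_distrib]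
  congr 1
  · congr 1
    · congr 1
      · rw [Finset.sum_comm]
        apply Finset.sum_congr rfl; intro i _
        rw [Finset.mul_sum]
      · rw [Finset.sum_comm]
        apply Finset.sum_congr rfl; intro j _
        rw [Finset.mul_sum]
    · rw [Finset.sum_comm]
      apply Finset.sum_congr rfl; intro i _
      rw [Finset.mul_sum]
  · rw [Finset.sum_comm]
    apply Finset.sum_congr rfl; intro i _
    rw [Finset.mul_sum]

/-- Sufficient statistics for the Lagrangian (core of Fact 3): two
nonnegative dual assignments `β`, `β′` that agree on `β_{k,0}`, `β_{k,1}` and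
on the four linearly-sized sufficient statistics at every layer give the same
Lagrangian value at every primal point `(x, z)` and every `α`; that is, the
Lagrangian depends on the exponentially many dual variables only through
these statistics. -/
theorem lagrangian_sufficient_statistics
    (n : ℕ) (hn : 1 ≤ n) (d : ℕ → ℕ)
    (W : (k : ℕ) → Fin (d k) → Fin (d (k-1)) → ℝ)
    (b : (k : ℕ) → Fin (d k) → ℝ)
    (lhat uhat l u : (k : ℕ) → Fin (d k) → ℝ)
    (hblu : ∀ k, ∀ i, l k i ≤ u k i)
    (hbhat : ∀ k, ∀ i, lhat k i ≤ uhat k i)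
    (Wn : Fin (d (n-1)) → ℝ) (bn : ℝ)
    (β0 β1 β0' β1' : (k : ℕ) → Fin (d k) → ℝ)
    (βI βI' : (k : ℕ) → (Fin (d k) → Fin (d (k-1)) → Bool) → Fin (d k) → ℝ)
    (hβ0 : ∀ k ∈ Finset.Icc 1 (n-1), ∀ i, 0 ≤ β0 k i)
    (hβ1 : ∀ k ∈ Finset.Icc 1 (n-1), ∀ i, 0 ≤ β1 k i)
    (hβI : ∀ k ∈ Finset.Icc 1 (n-1), ∀ I ∈ Ek (d k) (d (k-1)), ∀ i, 0 ≤ βI k I i)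
    (hβ0' : ∀ k ∈ Finset.Icc 1 (n-1), ∀ i, 0 ≤ β0' k i)
    (hβ1' : ∀ k ∈ Finset.Icc 1 (n-1), ∀ i, 0 ≤ β1' k i)
    (hβI' : ∀ k ∈ Finset.Icc 1 (n-1), ∀ I ∈ Ek (d k) (d (k-1)), ∀ i, 0 ≤ βI' k I i)
    (heq0 : ∀ k ∈ Finset.Icc 1 (n-1), ∀ i, β0 k i = β0' k i)
    (heq1 : ∀ k ∈ Finset.Icc 1 (n-1), ∀ i, β1 k i = β1' k i)
    (hstat1 : ∀ k ∈ Finset.Icc 1 (n-1), ∀ i,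
      (∑ I ∈ Ek (d k) (d (k-1)), βI k I i)
        = ∑ I ∈ Ek (d k) (d (k-1)), βI' k I i)
    (hstat2 : ∀ k ∈ Finset.Icc 1 (n-1), ∀ j,
      (∑ I ∈ Ek (d k) (d (k-1)), ∑ i, W k i j * mval I i j * βI k I i)
        = ∑ I ∈ Ek (d k) (d (k-1)), ∑ i, W k i j * mval I i j * βI' k I i)
    (hstat3 : ∀ k ∈ Finset.Icc 1 (n-1), ∀ i,
      (∑ I ∈ Ek (d k) (d (k-1)),
          (∑ j, W k i j * mval I i j * cLmat (W k) (l (k-1)) (u (k-1)) i j)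
            * βI k I i)
        = ∑ I ∈ Ek (d k) (d (k-1)),
            (∑ j, W k i j * mval I i j * cLmat (W k) (l (k-1)) (u (k-1)) i j)
              * βI' k I i)
    (hstat4 : ∀ k ∈ Finset.Icc 1 (n-1), ∀ i,
      (∑ I ∈ Ek (d k) (d (k-1)),
          (∑ j, W k i j * mval I i j * cUmat (W k) (l (k-1)) (u (k-1)) i j)
            * βI k I i)
        = ∑ I ∈ Ek (d k) (d (k-1)),
            (∑ j, W k i j * mval I i j * cUmat (W k) (l (k-1)) (u (k-1)) i j)
              * βI' k I i) :
    ∀ (x z : (k : ℕ) → Fin (d k) → ℝ) (α : (k : ℕ) → Fin (d k) → ℝ),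
      lagr n d W b lhat uhat l u Wn bn x z α β0 β1 βI
        = lagr n d W b lhat uhat l u Wn bn x z α β0' β1' βI' := by
  intro x z α
  unfold lagr
  congr 1
  apply Finset.sum_congr rfl
  intro k hk
  congr 1
  · congr 1
    · congr 1
      · apply Finset.sum_congr rfl; intro i _
        rw [heq0 k hk i]
    · apply Finset.sum_congr rfl; intro i _
      rw [heq1 k hk i]
  · rw [layer_stat, layer_stat]
    congr 1
    · congr 1
      · congr 1
        · apply Finset.sum_congr rfl; intro i _
          rw [hstat1 k hk i]
        · apply Finset.sum_congr rfl; intro j _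
          rw [hstat2 k hk j]
      · apply Finset.sum_congr rfl; intro i _
        rw [hstat3 k hk i]
    · apply Finset.sum_congr rfl; intro i _
      rw [hstat4 k hk i]
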